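/- arXiv:1904.10096 — 2 statements merged into one kernel-verified Lean document; each statement's English description precedes it below -/
import Mathlib

section
/- For the N×N input-queued switch, the cone K = {x ∈ ℝ^{N²}₊ : x = Σ_{ℓ=1}^{2N} ξ_ℓ c⁽ˡ⁾, ξ_ℓ ≥ 0}, generated by the 2N row-indicator and column-indicator vectors c⁽ˡ⁾, equals the set {x ∈ ℝ^{N²}₊ : x_{ij} = (1/N) Σ_{j'} x_{ij'} + (1/N) Σ_{i'} x_{i'j} − (1/N²) Σ_{i',j'} x_{i'j'} for all i, j ∈ [N]}, where entries are indexed by pairs (i,j). -/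
open Finset

/-- for the N×N input-queued switch, the cone generated by the row-indicator
and column-indicator vectors, intersected with the nonnegative orthant as conic
combinations, equals the set of nonnegative `x` satisfying
`x_{ij} = (1/N) Σ_{j'} x_{ij'} + (1/N) Σ_{i'} x_{i'j} − (1/N²) Σ_{i',j'} x_{i'j'}`. -/
theorem stmt4 (N : ℕ) (hN : 0 < N)
    (rowInd : Fin N → (Fin N × Fin N → ℝ))
    (colInd : Fin N → (Fin N × Fin N → ℝ))
    (hrow : ∀ l p, rowInd l p = if p.1 = l then 1 else 0)
    (hcol : ∀ l p, colInd l p = if p.2 = l then 1 else 0) :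
    {x : Fin N × Fin N → ℝ | (∀ p, 0 ≤ x p) ∧
        ∃ ξr ξc : Fin N → ℝ, (∀ l, 0 ≤ ξr l) ∧ (∀ l, 0 ≤ ξc l) ∧
          x = (∑ l, ξr l • rowInd l) + ∑ l, ξc l • colInd l} =
    {x : Fin N × Fin N → ℝ | (∀ p, 0 ≤ x p) ∧
        ∀ i j : Fin N, x (i, j) =
          (1 / (N : ℝ)) * ∑ j', x (i, j') + (1 / (N : ℝ)) * ∑ i', x (i', j)
            - (1 / (N : ℝ) ^ 2) * ∑ i', ∑ j', x (i', j')} := by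
  have hN' : (N : ℝ) ≠ 0 := Nat.cast_ne_zero.2 hN.ne'
  have key : ∀ (ξr ξc : Fin N → ℝ) (p : Fin N × Fin N),
      ((∑ l, ξr l • rowInd l) + ∑ l, ξc l • colInd l) p = ξr p.1 + ξc p.2 := by
    intro ξr ξc p
    simp only [Pi.add_apply, Finset.sum_apply, Pi.smul_apply, hrow, hcol, smul_eq_mul,
      mul_ite, mul_one, mul_zero]
    rw [Finset.sum_ite_eq univ p.1 ξr, Finset.sum_ite_eq univ p.2 ξc]
    simp
  ext x
  simp only [Set.mem_setOf_eq]
  constructor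
  · rintro ⟨hpos, ξr, ξc, hξr, hξc, hx⟩
    refine ⟨hpos, fun i j => ?_⟩
    have hval : ∀ i j : Fin N, x (i, j) = ξr i + ξc j := by
      intro i j
      rw [hx]; exact key ξr ξc (i, j)
    simp only [hval]
    have h1 : ∑ j', (ξr i + ξc j') = N * ξr i + ∑ j', ξc j' := by
      rw [Finset.sum_add_distrib, Finset.sum_const, Finset.card_univ, Fintype.card_fin,
        nsmul_eq_mul]
    have h2 : ∑ i', (ξr i' + ξc j) = (∑ i', ξr i') + N * ξc j := by
      rw [Finset.sum_add_distrib, Finset.sum_const, Finset.card_univ, Fintype.card_fin,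
        nsmul_eq_mul]
    have h3 : ∑ i', ∑ j', (ξr i' + ξc j') = N * (∑ i', ξr i') + N * ∑ j', ξc j' := by
      have : ∀ i' : Fin N, ∑ j', (ξr i' + ξc j') = N * ξr i' + ∑ j', ξc j' := by
        intro i'
        rw [Finset.sum_add_distrib, Finset.sum_const, Finset.card_univ, Fintype.card_fin,
          nsmul_eq_mul]
      rw [Finset.sum_congr rfl fun i' _ => this i', Finset.sum_add_distrib,
        Finset.sum_const, Finset.card_univ, Fintype.card_fin, nsmul_eq_mul,
        ← Finset.mul_sum]
    rw [h1, h2, h3]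
    field_simp
    ring
  · rintro ⟨hpos, heq⟩
    refine ⟨hpos, ?_⟩
    set r : Fin N → ℝ := fun i => (1 / (N : ℝ)) * ∑ j', x (i, j') with hr
    set c : Fin N → ℝ := fun j => (1 / (N : ℝ)) * ∑ i', x (i', j) with hc
    set S : ℝ := (1 / (N : ℝ) ^ 2) * ∑ i', ∑ j', x (i', j') with hS
    have hval : ∀ i j : Fin N, x (i, j) = r i + c j - S := fun i j => heq i j
    haveI : Nonempty (Fin N) := ⟨⟨0, hN⟩⟩
    obtain ⟨i0, _, hi0⟩ := Finset.exists_min_image univ r ⟨Classical.arbitrary _,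
      Finset.mem_univ _⟩
    refine ⟨fun i => r i - r i0, fun j => c j - S + r i0, ?_, ?_, ?_⟩
    · intro l; dsimp only; have := hi0 l (Finset.mem_univ l); linarith
    · intro l
      dsimp only
      have h0 := hpos (i0, l)
      rw [hval i0 l] at h0
      linarith
    · funext p
      rw [key]
      obtain ⟨i, j⟩ := p
      have := hval i j
      simp only at this ⊢
      linarith
end

section
/- Let Φ be a nonnegative real random variable, and let α, β be nonnegative bounded random variables such that Φ, α, β are mutually independent, with E[α] = (1−ε)c and E[β] = c for some c > 0 and ε ∈ (0,1). Define χ = max(β − Φ − α, 0) (unused service) and Φ⁺ = Φ + α − β + χ, and suppose Φ⁺ has the same distribution as Φ (steady state) with E[Φ²] < ∞ and Φ⁺χ = 0 almost surely. Then E[Φ] ≥ (E[α²] + E[β²] − 2E[α]E[β] − E[χ²]) / (2εc), and E[χ] = εc. -/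
open MeasureTheory ProbabilityTheory

/-- steady-state drift bound for a single-server queue: if `Φ⁺ = Φ + α − β + χ`
with `χ = max(β − Φ − α, 0)` has the same distribution as `Φ`, `Φ⁺ χ = 0` a.s.,
`E α = (1−ε)c`, `E β = c`, then
`E Φ ≥ (E α² + E β² − 2 E α E β − E χ²) / (2 ε c)` and `E χ = ε c`. -/
theorem stmt16 {Ω : Type*} [MeasurableSpace Ω] (μ : Measure Ω) [IsProbabilityMeasure μ]
    (Φ α β χ Φplus : Ω → ℝ)
    (hΦmeas : Measurable Φ) (hαmeas : Measurable α) (hβmeas : Measurable β)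
    (hΦ0 : ∀ ω, 0 ≤ Φ ω) (hα0 : ∀ ω, 0 ≤ α ω) (hβ0 : ∀ ω, 0 ≤ β ω)
    (hbdd : ∃ B : ℝ, ∀ ω, α ω ≤ B ∧ β ω ≤ B)
    (hindep : iIndepFun ![Φ, α, β] μ)
    (c ε : ℝ) (hc : 0 < c) (hε : ε ∈ Set.Ioo (0 : ℝ) 1)
    (hEα : ∫ ω, α ω ∂μ = (1 - ε) * c) (hEβ : ∫ ω, β ω ∂μ = c)
    (hχ : χ = fun ω => max (β ω - Φ ω - α ω) 0)
    (hΦplus : Φplus = fun ω => Φ ω + α ω - β ω + χ ω)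
    (hstat : μ.map Φplus = μ.map Φ)
    (hL2 : MemLp Φ 2 μ)
    (hcomp : ∀ᵐ ω ∂μ, Φplus ω * χ ω = 0) :
    (∫ ω, Φ ω ∂μ ≥
      ((∫ ω, (α ω) ^ 2 ∂μ) + (∫ ω, (β ω) ^ 2 ∂μ)
        - 2 * (∫ ω, α ω ∂μ) * (∫ ω, β ω ∂μ) - ∫ ω, (χ ω) ^ 2 ∂μ) / (2 * ε * c))
    ∧ ∫ ω, χ ω ∂μ = ε * c := by
  obtain ⟨B, hB⟩ := hbdd
  obtain ⟨hε0, hε1⟩ := hε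
  -- measurability
  have hχmeas : Measurable χ := by
    rw [hχ]; exact ((hβmeas.sub hΦmeas).sub hαmeas).max measurable_const
  have hΦpmeas : Measurable Φplus := by
    rw [hΦplus]; exact ((hΦmeas.add hαmeas).sub hβmeas).add hχmeas
  -- bounds
  have hαnorm : ∀ ω, ‖α ω‖ ≤ B := fun ω => by
    rw [Real.norm_eq_abs, abs_of_nonneg (hα0 ω)]; exact (hB ω).1
  have hβnorm : ∀ ω, ‖β ω‖ ≤ B := fun ω => by
    rw [Real.norm_eq_abs, abs_of_nonneg (hβ0 ω)]; exact (hB ω).2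
  have hχ0 : ∀ ω, 0 ≤ χ ω := fun ω => by rw [hχ]; exact le_max_right _ _
  have hχnorm : ∀ ω, ‖χ ω‖ ≤ B := fun ω => by
    rw [Real.norm_eq_abs, abs_of_nonneg (hχ0 ω), hχ]
    have h1 := hΦ0 ω; have h2 := hα0 ω; have h3 := (hB ω).2; have h4 := hβ0 ω
    exact max_le (by linarith) (by linarith)
  -- integrability
  have hΦint : Integrable Φ μ := hL2.integrable one_le_two
  have hαint : Integrable α μ :=
    ⟨hαmeas.aestronglyMeasurable, HasFiniteIntegral.of_bounded (ae_of_all _ hαnorm)⟩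
  have hβint : Integrable β μ :=
    ⟨hβmeas.aestronglyMeasurable, HasFiniteIntegral.of_bounded (ae_of_all _ hβnorm)⟩
  have hχint : Integrable χ μ :=
    ⟨hχmeas.aestronglyMeasurable, HasFiniteIntegral.of_bounded (ae_of_all _ hχnorm)⟩
  have hΦsq : Integrable (fun ω => Φ ω ^ 2) μ := hL2.integrable_sq
  have hαα : Integrable (fun ω => α ω * α ω) μ :=
    hαint.bdd_mul hαmeas.aestronglyMeasurable (ae_of_all _ hαnorm)
  have hββ : Integrable (fun ω => β ω * β ω) μ :=
    hβint.bdd_mul hβmeas.aestronglyMeasurable (ae_of_all _ hβnorm)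
  have hχχ : Integrable (fun ω => χ ω * χ ω) μ :=
    hχint.bdd_mul hχmeas.aestronglyMeasurable (ae_of_all _ hχnorm)
  have hαΦ : Integrable (fun ω => α ω * Φ ω) μ :=
    hΦint.bdd_mul hαmeas.aestronglyMeasurable (ae_of_all _ hαnorm)
  have hβΦ : Integrable (fun ω => β ω * Φ ω) μ :=
    hΦint.bdd_mul hβmeas.aestronglyMeasurable (ae_of_all _ hβnorm)
  have hαβ : Integrable (fun ω => α ω * β ω) μ :=
    hβint.bdd_mul hαmeas.aestronglyMeasurable (ae_of_all _ hαnorm)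
  -- independence
  have iΦα : IndepFun Φ α μ := by
    have h := hindep.indepFun (show (0 : Fin 3) ≠ 1 by decide)
    simpa using h
  have iΦβ : IndepFun Φ β μ := by
    have h := hindep.indepFun (show (0 : Fin 3) ≠ 2 by decide)
    simpa using h
  have iαβ : IndepFun α β μ := by
    have h := hindep.indepFun (show (1 : Fin 3) ≠ 2 by decide)
    simpa using h
  have EΦα : ∫ ω, Φ ω * α ω ∂μ = (∫ ω, Φ ω ∂μ) * ∫ ω, α ω ∂μ :=
    iΦα.integral_mul_eq_mul_integral hΦint.1 hαint.1
  have EΦβ : ∫ ω, Φ ω * β ω ∂μ = (∫ ω, Φ ω ∂μ) * ∫ ω, β ω ∂μ :=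
    iΦβ.integral_mul_eq_mul_integral hΦint.1 hβint.1
  have Eαβ : ∫ ω, α ω * β ω ∂μ = (∫ ω, α ω ∂μ) * ∫ ω, β ω ∂μ :=
    iαβ.integral_mul_eq_mul_integral hαint.1 hβint.1
  -- first moment identity : E χ = ε c
  have hmean : ∫ ω, Φplus ω ∂μ = ∫ ω, Φ ω ∂μ := by
    calc ∫ ω, Φplus ω ∂μ = ∫ y, y ∂(μ.map Φplus) :=
          (integral_map hΦpmeas.aemeasurable measurable_id.aestronglyMeasurable).symm
      _ = ∫ y, y ∂(μ.map Φ) := by rw [hstat]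
      _ = ∫ ω, Φ ω ∂μ :=
          integral_map hΦmeas.aemeasurable measurable_id.aestronglyMeasurable
  have hsplit : ∫ ω, Φplus ω ∂μ
      = ∫ ω, Φ ω ∂μ + ∫ ω, α ω ∂μ - ∫ ω, β ω ∂μ + ∫ ω, χ ω ∂μ := by
    have j1 : Integrable (fun ω => Φ ω + α ω) μ := hΦint.add hαint
    have j2 : Integrable (fun ω => Φ ω + α ω - β ω) μ := j1.sub hβint
    simp only [hΦplus]
    rw [integral_add j2 hχint, integral_sub j1 hβint, integral_add hΦint hαint]
  have hEχ : ∫ ω, χ ω ∂μ = ε * c := by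
    rw [hsplit] at hmean
    rw [hEα, hEβ] at hmean
    linarith
  refine ⟨?_, hEχ⟩
  -- second moment identity
  have hsq2 : ∫ ω, Φplus ω ^ 2 ∂μ = ∫ ω, Φ ω ^ 2 ∂μ := by
    calc ∫ ω, Φplus ω ^ 2 ∂μ = ∫ y, y ^ 2 ∂(μ.map Φplus) :=
          (integral_map hΦpmeas.aemeasurable
            (measurable_id.pow_const 2).aestronglyMeasurable).symm
      _ = ∫ y, y ^ 2 ∂(μ.map Φ) := by rw [hstat]
      _ = ∫ ω, Φ ω ^ 2 ∂μ :=
          integral_map hΦmeas.aemeasurable (measurable_id.pow_const 2).aestronglyMeasurable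
  have hae : ∀ᵐ ω ∂μ, Φplus ω ^ 2 = (Φ ω + α ω - β ω) ^ 2 - χ ω * χ ω := by
    filter_upwards [hcomp] with ω h
    have hs : Φplus ω = (Φ ω + α ω - β ω) + χ ω := by rw [hΦplus]
    rw [hs] at h ⊢
    linear_combination (2 : ℝ) * h
  have hsint : Integrable (fun ω => (Φ ω + α ω - β ω) ^ 2) μ := by
    have heq : (fun ω => (Φ ω + α ω - β ω) ^ 2)
        = fun ω => Φ ω ^ 2 + (α ω * α ω + β ω * β ω + 2 * (α ω * Φ ω)
            - 2 * (β ω * Φ ω) - 2 * (α ω * β ω)) := by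
      funext ω; ring
    rw [heq]
    exact hΦsq.add ((((hαα.add hββ).add (hαΦ.const_mul 2)).sub (hβΦ.const_mul 2)).sub
      (hαβ.const_mul 2))
  have hstep : ∫ ω, Φplus ω ^ 2 ∂μ
      = ∫ ω, (Φ ω + α ω - β ω) ^ 2 ∂μ - ∫ ω, χ ω * χ ω ∂μ := by
    rw [integral_congr_ae hae, integral_sub hsint hχχ]
  have hexp : ∫ ω, (Φ ω + α ω - β ω) ^ 2 ∂μ
      = ∫ ω, Φ ω ^ 2 ∂μ + ∫ ω, α ω * α ω ∂μ + ∫ ω, β ω * β ω ∂μ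
        + 2 * ∫ ω, Φ ω * α ω ∂μ - 2 * ∫ ω, Φ ω * β ω ∂μ - 2 * ∫ ω, α ω * β ω ∂μ := by
    have heq : (fun ω => (Φ ω + α ω - β ω) ^ 2)
        = fun ω => Φ ω ^ 2 + α ω * α ω + β ω * β ω + 2 * (Φ ω * α ω)
            - 2 * (Φ ω * β ω) - 2 * (α ω * β ω) := by
      funext ω; ring
    have hΦα : Integrable (fun ω => Φ ω * α ω) μ := by
      simpa [mul_comm] using hαΦ
    have hΦβ : Integrable (fun ω => Φ ω * β ω) μ := by
      simpa [mul_comm] using hβΦ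
    have ic1 : Integrable (fun ω => 2 * (Φ ω * α ω)) μ := hΦα.const_mul 2
    have ic2 : Integrable (fun ω => 2 * (Φ ω * β ω)) μ := hΦβ.const_mul 2
    have ic3 : Integrable (fun ω => 2 * (α ω * β ω)) μ := hαβ.const_mul 2
    have i1 : Integrable (fun ω => Φ ω ^ 2 + α ω * α ω) μ := hΦsq.add hαα
    have i2 : Integrable (fun ω => Φ ω ^ 2 + α ω * α ω + β ω * β ω) μ := i1.add hββ
    have i3 : Integrable
        (fun ω => Φ ω ^ 2 + α ω * α ω + β ω * β ω + 2 * (Φ ω * α ω)) μ := i2.add ic1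
    have i4 : Integrable
        (fun ω => Φ ω ^ 2 + α ω * α ω + β ω * β ω + 2 * (Φ ω * α ω) - 2 * (Φ ω * β ω)) μ :=
      i3.sub ic2
    rw [heq, integral_sub i4 ic3, integral_sub i3 ic2, integral_add i2 ic1,
      integral_add i1 hββ, integral_add hΦsq hαα,
      integral_const_mul, integral_const_mul, integral_const_mul]
  -- combine
  have hkey : ∫ ω, α ω * α ω ∂μ + ∫ ω, β ω * β ω ∂μ
      - 2 * ((1 - ε) * c * c) - ∫ ω, χ ω * χ ω ∂μ
      = 2 * ε * c * ∫ ω, Φ ω ∂μ := by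
    rw [hexp, EΦα, EΦβ, Eαβ, hEα, hEβ, hsq2] at hstep
    linear_combination -hstep
  have hαsq : ∫ ω, α ω ^ 2 ∂μ = ∫ ω, α ω * α ω ∂μ := by
    simp [pow_two]
  have hβsq : ∫ ω, β ω ^ 2 ∂μ = ∫ ω, β ω * β ω ∂μ := by
    simp [pow_two]
  have hχsq : ∫ ω, χ ω ^ 2 ∂μ = ∫ ω, χ ω * χ ω ∂μ := by
    simp [pow_two]
  rw [ge_iff_le, div_le_iff₀ (by positivity), hαsq, hβsq, hχsq, hEα, hEβ]
  linarith [hkey]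
end
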